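/- Let s ≥ 0 and let a_s(ξ,η,θ) = |η + θξ|^s. For all multi-indices α, β ∈ ℕ₀ⁿ there is a constant C > 0 such that for all (ξ,η) in the cone Γ = {(ξ,η) ∈ ℝⁿ×ℝⁿ : 0 < |ξ| ≤ |η|/2}, one has sup_{0 ≤ θ ≤ 1} |∂_ξ^α ∂_η^β a_s(ξ,η,θ)| ≤ C |η|^{s−|α|−|β|}. -/

import Mathlib

noncomputable section

variable {n : ℕ}

/-- Directional derivative operator on functions on `ℝⁿ × ℝⁿ`. -/
def pd2 (v : EuclideanSpace ℝ (Fin n) × EuclideanSpace ℝ (Fin n))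
    (a : EuclideanSpace ℝ (Fin n) × EuclideanSpace ℝ (Fin n) → ℂ) :
    EuclideanSpace ℝ (Fin n) × EuclideanSpace ℝ (Fin n) → ℂ :=
  fun p => fderiv ℝ a p v

/-- Iterated directional derivatives along a list of directions. -/
def pdList2 : List (EuclideanSpace ℝ (Fin n) × EuclideanSpace ℝ (Fin n)) →
    (EuclideanSpace ℝ (Fin n) × EuclideanSpace ℝ (Fin n) → ℂ) →
    EuclideanSpace ℝ (Fin n) × EuclideanSpace ℝ (Fin n) → ℂ
  | [], a => a
  | v :: L, a => pd2 v (pdList2 L a)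

/-- The multi-index partial derivative `∂_ξ^α ∂_η^β` of a function `a(ξ,η)`. -/
def mderiv2 (α β : Fin n → ℕ)
    (a : EuclideanSpace ℝ (Fin n) × EuclideanSpace ℝ (Fin n) → ℂ) :
    EuclideanSpace ℝ (Fin n) × EuclideanSpace ℝ (Fin n) → ℂ :=
  pdList2
    ((List.finRange n).flatMap
        (fun i => List.replicate (α i) (EuclideanSpace.single i 1, 0))
      ++ (List.finRange n).flatMap
        (fun i => List.replicate (β i) (0, EuclideanSpace.single i 1))) a

open RealInnerProductSpace

namespace SymbolAux


variable {n : ℕ}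

abbrev E (n : ℕ) := EuclideanSpace ℝ (Fin n)

/-- A term `c * ‖x‖^t * ∏ ⟪x, vᵢ⟫`. -/
abbrev Term (n : ℕ) := ℝ × ℝ × List (E n)

def Pf (L : List (E n)) (x : E n) : ℝ := (L.map (fun v => ⟪x, v⟫)).prod

def tf (T : Term n) (x : E n) : ℝ := T.1 * ‖x‖ ^ T.2.1 * Pf T.2.2 x

def Fn (Ts : List (Term n)) (x : E n) : ℝ := (Ts.map (fun T => tf T x)).sum

def csum (Ts : List (Term n)) : ℝ := (Ts.map (fun T => |T.1|)).sum

@[simp] lemma Pf_nil (x : E n) : Pf [] x = 1 := rfl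
@[simp] lemma Pf_cons (v : E n) (L : List (E n)) (x : E n) :
    Pf (v :: L) x = ⟪x, v⟫ * Pf L x := by simp [Pf]
@[simp] lemma Fn_nil (x : E n) : Fn [] x = 0 := rfl
@[simp] lemma Fn_cons (T : Term n) (Ts : List (Term n)) (x : E n) :
    Fn (T :: Ts) x = tf T x + Fn Ts x := by simp [Fn]
@[simp] lemma Fn_append (A B : List (Term n)) (x : E n) :
    Fn (A ++ B) x = Fn A x + Fn B x := by simp [Fn]
@[simp] lemma csum_nil : csum ([] : List (Term n)) = 0 := rfl
@[simp] lemma csum_cons (T : Term n) (Ts : List (Term n)) :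
    csum (T :: Ts) = |T.1| + csum Ts := by simp [csum]
@[simp] lemma csum_append (A B : List (Term n)) :
    csum (A ++ B) = csum A + csum B := by simp [csum]

/-- formal derivative of `Pf L` in direction `u`, as a list of terms -/
def dP0 (u : E n) : List (E n) → List (Term n)
  | [] => []
  | v :: L => (⟪u, v⟫, 0, L) :: (dP0 u L).map (fun T => (T.1, T.2.1, v :: T.2.2))

/-- formal derivative of a term in direction `u` -/
def dTerm (u : E n) (T : Term n) : List (Term n) :=
  (T.1 * T.2.1, T.2.1 - 2, u :: T.2.2) ::
    (dP0 u T.2.2).map (fun T' => (T.1 * T'.1, T.2.1 + T'.2.1, T'.2.2))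

def dTs (u : E n) (Ts : List (Term n)) : List (Term n) := Ts.flatMap (dTerm u)

@[simp] lemma dTs_nil (u : E n) : dTs u [] = [] := rfl
@[simp] lemma dTs_cons (u : E n) (T : Term n) (Ts : List (Term n)) :
    dTs u (T :: Ts) = dTerm u T ++ dTs u Ts := rfl

lemma Fn_map_cons (v : E n) (Ts : List (Term n)) (x : E n) :
    Fn (Ts.map (fun T => (T.1, T.2.1, v :: T.2.2))) x = ⟪x, v⟫ * Fn Ts x := by
  induction Ts with
  | nil => simp
  | cons T Ts ih => simp [ih, tf]; ring

lemma Pf_deriv (L : List (E n)) (x : E n) :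
    ∃ D : E n →L[ℝ] ℝ, HasFDerivAt (Pf L) D x ∧ ∀ u, D u = Fn (dP0 u L) x := by
  induction L with
  | nil =>
    refine ⟨0, ?_, fun u => by simp [dP0]⟩
    exact hasFDerivAt_const (1 : ℝ) x
  | cons v L ih =>
    obtain ⟨D, hD, hDval⟩ := ih
    have hv : HasFDerivAt (fun y : E n => ⟪y, v⟫) (innerSL ℝ v) x := by
      have : (fun y : E n => ⟪y, v⟫) = fun y => (innerSL ℝ v) y := by
        funext y; simp [real_inner_comm, mul_comm, add_comm]
      rw [this]; exact (innerSL ℝ v).hasFDerivAt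
    have hmul := hv.mul hD
    refine ⟨⟪x, v⟫ • D + Pf L x • innerSL ℝ v, ?_, fun u => ?_⟩
    · exact hmul.congr_of_eventuallyEq (Filter.Eventually.of_forall fun y => Pf_cons v L y)
    · simp [dP0, Fn_map_cons, hDval, tf, Real.rpow_zero, real_inner_comm, mul_comm, add_comm]

lemma norm_rpow_deriv (t : ℝ) {x : E n} (hx : x ≠ 0) :
    ∃ D : E n →L[ℝ] ℝ, HasFDerivAt (fun y : E n => ‖y‖ ^ t) D x ∧
      ∀ u, D u = t * ‖x‖ ^ (t - 2) * ⟪x, u⟫ := by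
  have hq : HasFDerivAt (fun y : E n => ⟪y, y⟫)
      ((fderivInnerCLM ℝ (x, x)).comp ((ContinuousLinearMap.id ℝ (E n)).prod
        (ContinuousLinearMap.id ℝ (E n)))) x := by
    simpa using ((hasFDerivAt_id x).inner ℝ (hasFDerivAt_id x))
  have hqx : ⟪x, x⟫ ≠ 0 := by
    rw [real_inner_self_eq_norm_sq]
    exact pow_ne_zero 2 (norm_ne_zero_iff.mpr hx)
  have hr := Real.hasDerivAt_rpow_const (x := ⟪x, x⟫) (p := t / 2) (Or.inl hqx)
  have hcomp := HasDerivAt.comp_hasFDerivAt_of_eq x hr hq rfl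
  have hfun : (fun y : E n => ⟪y, y⟫ ^ (t / 2)) = fun y : E n => ‖y‖ ^ t := by
    funext y
    rw [real_inner_self_eq_norm_sq, ← Real.rpow_natCast ‖y‖ 2,
      ← Real.rpow_mul (norm_nonneg y)]
    congr 1
    push_cast
    ring
  simp only [Function.comp_def] at hcomp
  rw [hfun] at hcomp
  refine ⟨_, hcomp, fun u => ?_⟩
  have h1 : (⟪x, x⟫ : ℝ) ^ (t / 2 - 1) = ‖x‖ ^ (t - 2) := by
    rw [real_inner_self_eq_norm_sq, ← Real.rpow_natCast ‖x‖ 2,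
      ← Real.rpow_mul (norm_nonneg x)]
    norm_num
    ring_nf
  simp only [ContinuousLinearMap.smul_apply, ContinuousLinearMap.comp_apply,
    ContinuousLinearMap.prod_apply, ContinuousLinearMap.coe_id', id_eq,
    fderivInnerCLM_apply, smul_eq_mul]
  rw [h1, real_inner_comm u x]
  ring

lemma Fn_map_smul (c t : ℝ) (Ts : List (Term n)) {x : E n} (hx : x ≠ 0) :
    Fn (Ts.map (fun T' => (c * T'.1, t + T'.2.1, T'.2.2))) x = c * ‖x‖ ^ t * Fn Ts x := by
  induction Ts with
  | nil => simp
  | cons T Ts ih =>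
    simp only [List.map_cons, Fn_cons, ih]
    have : (‖x‖ : ℝ) ^ (t + T.2.1) = ‖x‖ ^ t * ‖x‖ ^ T.2.1 :=
      Real.rpow_add (norm_pos_iff.mpr hx) _ _
    simp [tf, this]
    ring

lemma tf_deriv (T : Term n) {x : E n} (hx : x ≠ 0) :
    ∃ D : E n →L[ℝ] ℝ, HasFDerivAt (tf T) D x ∧ ∀ u, D u = Fn (dTerm u T) x := by
  obtain ⟨c, t, L⟩ := T
  obtain ⟨Dn, hDn, hDnval⟩ := norm_rpow_deriv (n := n) t hx
  obtain ⟨Dp, hDp, hDpval⟩ := Pf_deriv L x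
  have hmul := (hDn.mul hDp).const_mul c
  refine ⟨c • (‖x‖ ^ t • Dp + Pf L x • Dn), ?_, fun u => ?_⟩
  · exact hmul.congr_of_eventuallyEq (Filter.Eventually.of_forall fun y => by
      simp [tf]; ring)
  · have h2 : Fn ((dP0 u L).map (fun T' => (c * T'.1, t + T'.2.1, T'.2.2))) x
        = c * ‖x‖ ^ t * Fn (dP0 u L) x := Fn_map_smul c t (dP0 u L) hx
    simp only [dTerm, Fn_cons, h2, tf, Pf_cons]
    simp [hDnval, hDpval, real_inner_comm]
    ring

lemma Fn_deriv (Ts : List (Term n)) {x : E n} (hx : x ≠ 0) :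
    ∃ D : E n →L[ℝ] ℝ, HasFDerivAt (Fn Ts) D x ∧ ∀ u, D u = Fn (dTs u Ts) x := by
  induction Ts with
  | nil =>
    refine ⟨0, ?_, fun u => by simp⟩
    exact hasFDerivAt_const (0 : ℝ) x
  | cons T Ts ih =>
    obtain ⟨D1, hD1, hD1val⟩ := tf_deriv T hx
    obtain ⟨D2, hD2, hD2val⟩ := ih
    refine ⟨D1 + D2, ?_, fun u => ?_⟩
    · exact (hD1.add hD2).congr_of_eventuallyEq
        (Filter.Eventually.of_forall fun y => Fn_cons T Ts y)
    · simp [hD1val, hD2val]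

def GoodT (s : ℝ) (m : ℕ) (T : Term n) : Prop :=
  T.2.1 + T.2.2.length = s - m ∧ T.2.2.length ≤ m ∧ ∀ v ∈ T.2.2, ‖v‖ ≤ 1

lemma dP0_spec {u : E n} (hu : ‖u‖ ≤ 1) {L : List (E n)} (hL : ∀ v ∈ L, ‖v‖ ≤ 1) :
    ∀ T' ∈ dP0 u L, |T'.1| ≤ 1 ∧ T'.2.1 = 0 ∧ T'.2.2.length + 1 = L.length ∧
      ∀ w ∈ T'.2.2, ‖w‖ ≤ 1 := by
  induction L with
  | nil => simp [dP0]
  | cons v L ih =>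
    intro T' hT'
    simp only [dP0, List.mem_cons, List.mem_map] at hT'
    rcases hT' with rfl | ⟨T'', hT'', rfl⟩
    · refine ⟨?_, rfl, by simp, fun w hw => hL w (List.mem_cons_of_mem _ hw)⟩
      calc |⟪u, v⟫| ≤ ‖u‖ * ‖v‖ := abs_real_inner_le_norm u v
        _ ≤ 1 := by nlinarith [hL v (List.mem_cons_self), norm_nonneg u, norm_nonneg v]
    · obtain ⟨h1, h2, h3, h4⟩ := ih (fun w hw => hL w (List.mem_cons_of_mem _ hw)) T'' hT''
      refine ⟨h1, h2, by simp only [List.length_cons]; omega, fun w hw => ?_⟩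
      rcases List.mem_cons.mp hw with rfl | hw
      · exact hL w (List.mem_cons_self)
      · exact h4 w hw

lemma csum_map_le (c t : ℝ) {Ts : List (Term n)} (h : ∀ T' ∈ Ts, |T'.1| ≤ 1) :
    csum (Ts.map (fun T' => (c * T'.1, t + T'.2.1, T'.2.2))) ≤ |c| * Ts.length := by
  induction Ts with
  | nil => simp
  | cons T Ts ih =>
    simp only [List.map_cons, csum_cons, List.length_cons]
    have hT := h T (List.mem_cons_self)
    have h2 := ih (fun T' h' => h T' (List.mem_cons_of_mem _ h'))
    have h3 : |c * T.1| ≤ |c| := by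
      rw [abs_mul]; nlinarith [abs_nonneg c, abs_nonneg T.1]
    push_cast
    nlinarith [abs_nonneg c]

lemma dP0_length (u : E n) (L : List (E n)) : (dP0 u L).length = L.length := by
  induction L with
  | nil => rfl
  | cons v L ih => simp [dP0, ih]

lemma dTerm_good {s : ℝ} {m : ℕ} {u : E n} (hu : ‖u‖ ≤ 1) {T : Term n}
    (hT : GoodT s m T) :
    (∀ T' ∈ dTerm u T, GoodT s (m + 1) T') ∧
      csum (dTerm u T) ≤ (|s| + 3 * m + 3) * |T.1| := by
  obtain ⟨c, t, L⟩ := T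
  obtain ⟨he, hlen, hL⟩ := hT
  dsimp only at he hlen hL ⊢
  have hlenR : (L.length : ℝ) ≤ m := by exact_mod_cast hlen
  constructor
  · intro T' hT'
    simp only [dTerm, List.mem_cons, List.mem_map] at hT'
    rcases hT' with rfl | ⟨T'', hT'', rfl⟩
    · refine ⟨?_, by simpa using Nat.succ_le_succ hlen, fun v hv => ?_⟩
      · simp only [List.length_cons]
        push_cast at he ⊢
        linarith
      · rcases List.mem_cons.mp hv with rfl | hv
        · exact hu
        · exact hL v hv
    · obtain ⟨h1, h2, h3, h4⟩ := dP0_spec hu hL T'' hT''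
      have h3R : (T''.2.2.length : ℝ) + 1 = L.length := by exact_mod_cast h3
      refine ⟨?_, ?_, h4⟩
      · show (t + T''.2.1) + ((T''.2.2.length : ℕ) : ℝ) = s - ((m + 1 : ℕ) : ℝ)
        rw [h2]
        push_cast
        linarith
      · show T''.2.2.length ≤ m + 1
        omega
  · have hc1 : ∀ T' ∈ dP0 u L, |T'.1| ≤ 1 := fun T' h' => (dP0_spec hu hL T' h').1
    have hlen0 : (dP0 u L).length = L.length := dP0_length u L
    have hmap := csum_map_le c t hc1
    rw [hlen0] at hmap
    have hcast : (0:ℝ) ≤ (m:ℝ) + L.length := add_nonneg (Nat.cast_nonneg _) (Nat.cast_nonneg _)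
    have ht : |t| ≤ |s| + 2 * m := by
      have ht' : t = s - ((m:ℝ) + L.length) := by linarith
      rw [ht']
      refine (abs_sub s _).trans ?_
      rw [abs_of_nonneg hcast]
      linarith
    simp only [dTerm, csum_cons]
    have : |c * t| ≤ |c| * (|s| + 2 * m) := by
      rw [abs_mul, mul_comm]
      exact mul_le_mul_of_nonneg_right ht (abs_nonneg c) |>.trans_eq (mul_comm _ _)
    have h4 : |c| * (L.length : ℝ) ≤ |c| * m := mul_le_mul_of_nonneg_left hlenR (abs_nonneg c)
    nlinarith [abs_nonneg c, abs_nonneg s, (Nat.cast_nonneg m : (0:ℝ) ≤ (m:ℝ))]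

lemma dTs_good {s : ℝ} {m : ℕ} {u : E n} (hu : ‖u‖ ≤ 1) {Ts : List (Term n)}
    (h1 : ∀ T ∈ Ts, GoodT s m T) :
    (∀ T' ∈ dTs u Ts, GoodT s (m + 1) T') ∧
      csum (dTs u Ts) ≤ (|s| + 3 * m + 3) * csum Ts := by
  induction Ts with
  | nil => simp
  | cons T Ts ih =>
    obtain ⟨g1, g2⟩ := dTerm_good hu (h1 T (List.mem_cons_self))
    obtain ⟨i1, i2⟩ := ih (fun T' h' => h1 T' (List.mem_cons_of_mem _ h'))
    constructor
    · intro T' hT'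
      rw [dTs_cons, List.mem_append] at hT'
      rcases hT' with h' | h'
      · exact g1 T' h'
      · exact i1 T' h'
    · rw [dTs_cons, csum_append, csum_cons]
      nlinarith [abs_nonneg s, (by positivity : (0:ℝ) ≤ (m:ℝ))]

lemma Pf_abs_le (L : List (E n)) (x : E n) (hL : ∀ v ∈ L, ‖v‖ ≤ 1) :
    |Pf L x| ≤ ‖x‖ ^ L.length := by
  induction L with
  | nil => simp
  | cons v L ih =>
    simp only [Pf_cons, List.length_cons, abs_mul, pow_succ]
    have h1 : |⟪x, v⟫| ≤ ‖x‖ := by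
      calc |⟪x, v⟫| ≤ ‖x‖ * ‖v‖ := abs_real_inner_le_norm _ _
        _ ≤ ‖x‖ := by nlinarith [hL v (List.mem_cons_self), norm_nonneg x, norm_nonneg v]
    have h2 := ih (fun w hw => hL w (List.mem_cons_of_mem _ hw))
    calc |⟪x, v⟫| * |Pf L x| ≤ ‖x‖ * ‖x‖ ^ L.length :=
        mul_le_mul h1 h2 (abs_nonneg _) (norm_nonneg _)
      _ = ‖x‖ ^ L.length * ‖x‖ := mul_comm _ _

lemma tf_bound {s : ℝ} {m : ℕ} {T : Term n} (hT : GoodT s m T) {x : E n} (hx : x ≠ 0) :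
    |tf T x| ≤ |T.1| * ‖x‖ ^ (s - m) := by
  obtain ⟨c, t, L⟩ := T
  obtain ⟨he, -, hL⟩ := hT
  dsimp only at he hL ⊢
  have hxp : (0:ℝ) < ‖x‖ := norm_pos_iff.mpr hx
  have h1 : |Pf L x| ≤ ‖x‖ ^ L.length := Pf_abs_le L x hL
  have key : ‖x‖ ^ t * ‖x‖ ^ (L.length : ℕ) = ‖x‖ ^ (s - (m : ℝ)) := by
    rw [← Real.rpow_natCast ‖x‖ L.length, ← Real.rpow_add hxp, he]
  have hrt : (0:ℝ) ≤ ‖x‖ ^ t := Real.rpow_nonneg (norm_nonneg x) t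
  calc |tf (c, t, L) x| = |c| * (‖x‖ ^ t * |Pf L x|) := by
        simp [tf, abs_mul, abs_of_nonneg hrt]; ring
    _ ≤ |c| * (‖x‖ ^ t * ‖x‖ ^ L.length) :=
        mul_le_mul_of_nonneg_left (mul_le_mul_of_nonneg_left h1 hrt) (abs_nonneg c)
    _ = |c| * ‖x‖ ^ (s - (m : ℝ)) := by rw [key]

lemma Fn_bound {s : ℝ} {m : ℕ} {Ts : List (Term n)} (h : ∀ T ∈ Ts, GoodT s m T)
    {x : E n} (hx : x ≠ 0) : |Fn Ts x| ≤ csum Ts * ‖x‖ ^ (s - (m : ℝ)) := by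
  induction Ts with
  | nil => simp
  | cons T Ts ih =>
    simp only [Fn_cons, csum_cons]
    calc |tf T x + Fn Ts x| ≤ |tf T x| + |Fn Ts x| := abs_add_le _ _
      _ ≤ |T.1| * ‖x‖ ^ (s - (m:ℝ)) + csum Ts * ‖x‖ ^ (s - (m:ℝ)) :=
          add_le_add (tf_bound (h T (List.mem_cons_self)) hx)
            (ih (fun T' h' => h T' (List.mem_cons_of_mem _ h')))
      _ = (|T.1| + csum Ts) * ‖x‖ ^ (s - (m:ℝ)) := by ring

def Bc (s : ℝ) : ℕ → ℝ
  | 0 => 1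
  | m + 1 => (|s| + 3 * m + 3) * Bc s m

lemma Bc_pos (s : ℝ) (m : ℕ) : 0 < Bc s m := by
  induction m with
  | zero => norm_num [Bc]
  | succ m ih =>
    have h : (0:ℝ) < |s| + 3 * m + 3 := by positivity
    simpa [Bc] using mul_pos h ih

lemma main (s θ : ℝ) (L : List (E n × E n)) (hL : ∀ v ∈ L, ‖v.2 + θ • v.1‖ ≤ 1) :
    ∃ Ts : List (Term n), (∀ T ∈ Ts, GoodT s L.length T) ∧ csum Ts ≤ Bc s L.length ∧
      ∀ p : E n × E n, p.2 + θ • p.1 ≠ 0 →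
        pdList2 L (fun p => ((‖p.2 + θ • p.1‖ ^ s : ℝ) : ℂ)) p
          = ((Fn Ts (p.2 + θ • p.1) : ℝ) : ℂ) := by
  induction L with
  | nil =>
    refine ⟨[(1, s, [])], ?_, ?_, ?_⟩
    · intro T hT
      simp only [List.mem_singleton] at hT
      subst hT
      exact ⟨by simp, by simp, by simp⟩
    · simp [csum, Bc]
    · intro p hp
      simp [pdList2, Fn, tf]
  | cons v L ih =>
    obtain ⟨Ts, hG, hC, hEq⟩ := ih (fun w hw => hL w (List.mem_cons_of_mem _ hw))
    have hu : ‖v.2 + θ • v.1‖ ≤ 1 := hL v (List.mem_cons_self)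
    refine ⟨dTs (v.2 + θ • v.1) Ts, (dTs_good hu hG).1, ?_, ?_⟩
    · calc csum (dTs _ Ts) ≤ (|s| + 3 * L.length + 3) * csum Ts := (dTs_good hu hG).2
        _ ≤ (|s| + 3 * L.length + 3) * Bc s L.length := by
            have h : (0:ℝ) < |s| + 3 * L.length + 3 := by positivity
            exact mul_le_mul_of_nonneg_left hC h.le
        _ = Bc s (L.length + 1) := by rw [Bc]
    · intro p hp
      set πL : (E n × E n) →L[ℝ] E n :=
        (ContinuousLinearMap.snd ℝ (E n) (E n)) + θ • (ContinuousLinearMap.fst ℝ (E n) (E n))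
        with hπL
      have hπapp : ∀ q : E n × E n, πL q = q.2 + θ • q.1 := fun q => by
        simp [hπL]
      obtain ⟨D, hD, hDval⟩ := Fn_deriv Ts (x := p.2 + θ • p.1) hp
      have hUopen : IsOpen {q : E n × E n | q.2 + θ • q.1 ≠ 0} := by
        have hcont : Continuous fun q : E n × E n => q.2 + θ • q.1 :=
          continuous_snd.add (continuous_fst.const_smul θ)
        exact IsOpen.preimage hcont isOpen_ne
      have hEv : pdList2 L (fun p => ((‖p.2 + θ • p.1‖ ^ s : ℝ) : ℂ)) =ᶠ[nhds p]
          fun q => ((Fn Ts (q.2 + θ • q.1) : ℝ) : ℂ) :=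
        Filter.eventuallyEq_of_mem (hUopen.mem_nhds hp) (fun q hq => hEq q hq)
      have hco : ⇑πL = fun q : E n × E n => q.2 + θ • q.1 := funext hπapp
      have hπ : HasFDerivAt (fun q : E n × E n => q.2 + θ • q.1) πL p :=
        hco ▸ πL.hasFDerivAt
      have hcomp : HasFDerivAt ((Fn Ts) ∘ fun q : E n × E n => q.2 + θ • q.1)
          (D.comp πL) p := hD.comp p hπ
      have hcomp2 := (Complex.ofRealCLM.hasFDerivAt).comp p hcomp
      show fderiv ℝ (pdList2 L (fun p => ((‖p.2 + θ • p.1‖ ^ s : ℝ) : ℂ))) p v = _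
      rw [hEv.fderiv_eq]
      have hfd : fderiv ℝ (fun q : E n × E n => ((Fn Ts (q.2 + θ • q.1) : ℝ) : ℂ)) p
          = Complex.ofRealCLM.comp (D.comp πL) := HasFDerivAt.fderiv hcomp2
      rw [hfd]
      have : D (πL v) = Fn (dTs (v.2 + θ • v.1) Ts) (p.2 + θ • p.1) := by
        rw [hπapp v]; exact hDval _
      simp [this]

end SymbolAux

open SymbolAux in
/-- Let `s ≥ 0` and `a_s(ξ,η,θ) = |η+θξ|^s`.  For all multi-indices `α, β` there
is `C > 0` such that on the cone `Γ = {0 < |ξ| ≤ |η|/2}`,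
`sup_{0≤θ≤1} |∂_ξ^α ∂_η^β a_s(ξ,η,θ)| ≤ C |η|^{s-|α|-|β|}`. -/
theorem symbol_derivative_bound (s : ℝ) (hs : 0 ≤ s) (α β : Fin n → ℕ) :
    ∃ C > (0 : ℝ), ∀ ξ η : EuclideanSpace ℝ (Fin n), 0 < ‖ξ‖ → ‖ξ‖ ≤ ‖η‖ / 2 →
      ∀ θ ∈ Set.Icc (0 : ℝ) 1,
        ‖mderiv2 α β (fun p => ((‖p.2 + θ • p.1‖ ^ s : ℝ) : ℂ)) (ξ, η)‖
          ≤ C * ‖η‖ ^ (s - ((∑ i, α i : ℕ) : ℝ) - ((∑ i, β i : ℕ) : ℝ)) := by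
  classical
  set m : ℕ := (∑ i, α i) + (∑ i, β i) with hm
  set r : ℝ := s - (m : ℝ) with hr
  refine ⟨Bc s m * ((3/2 : ℝ) ^ r + (1/2 : ℝ) ^ r), ?_, ?_⟩
  · have h1 : (0:ℝ) < (3/2 : ℝ) ^ r := Real.rpow_pos_of_pos (by norm_num) r
    have h2 : (0:ℝ) < (1/2 : ℝ) ^ r := Real.rpow_pos_of_pos (by norm_num) r
    have := Bc_pos s m
    positivity
  intro ξ η hξ hξη θ hθ
  obtain ⟨hθ0, hθ1⟩ := hθ
  have hη : (0:ℝ) < ‖η‖ := by linarith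
  -- the direction list
  set BigL : List (E n × E n) :=
    ((List.finRange n).flatMap
        (fun i => List.replicate (α i) (EuclideanSpace.single i 1, 0))
      ++ (List.finRange n).flatMap
        (fun i => List.replicate (β i) (0, EuclideanSpace.single i 1))) with hBigL
  have hLen : BigL.length = m := by
    rw [hBigL, List.length_append, List.length_flatMap, List.length_flatMap, hm,
      Fin.sum_univ_def, Fin.sum_univ_def]
    simp [Function.comp_def]
  have hdir : ∀ v ∈ BigL, ‖v.2 + θ • v.1‖ ≤ 1 := by
    intro v hv
    rw [hBigL, List.mem_append] at hv
    rcases hv with hv | hv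
    · rw [List.mem_flatMap] at hv
      obtain ⟨i, -, hv⟩ := hv
      have := List.eq_of_mem_replicate hv
      subst this
      show ‖(0 : E n) + θ • EuclideanSpace.single i (1:ℝ)‖ ≤ 1
      rw [zero_add, norm_smul, EuclideanSpace.norm_single, norm_one, mul_one,
        Real.norm_eq_abs]
      exact abs_le.mpr ⟨by linarith, hθ1⟩
    · rw [List.mem_flatMap] at hv
      obtain ⟨i, -, hv⟩ := hv
      have := List.eq_of_mem_replicate hv
      subst this
      show ‖EuclideanSpace.single i (1:ℝ) + θ • (0 : E n)‖ ≤ 1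
      rw [smul_zero, add_zero, EuclideanSpace.norm_single, norm_one]
  obtain ⟨Ts, hG, hC, hEq⟩ := main s θ BigL hdir
  rw [hLen] at hG hC
  -- the base point
  set x : E n := η + θ • ξ with hx
  have hθξ : ‖θ • ξ‖ ≤ ‖η‖ / 2 := by
    rw [norm_smul, Real.norm_eq_abs, abs_of_nonneg hθ0]
    nlinarith
  have hxlow : ‖η‖ / 2 ≤ ‖x‖ := by
    have h1 : ‖η‖ ≤ ‖x‖ + ‖θ • ξ‖ := by
      calc ‖η‖ = ‖x - θ • ξ‖ := by rw [hx]; congr 1; abel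
        _ ≤ ‖x‖ + ‖θ • ξ‖ := norm_sub_le _ _
    linarith
  have hxhigh : ‖x‖ ≤ 3/2 * ‖η‖ := by
    have h1 : ‖x‖ ≤ ‖η‖ + ‖θ • ξ‖ := norm_add_le _ _
    linarith
  have hxne : x ≠ 0 := by
    intro h
    rw [h, norm_zero] at hxlow
    linarith
  have hval := hEq (ξ, η) (by simpa using hxne)
  have hgoal : mderiv2 α β (fun p => ((‖p.2 + θ • p.1‖ ^ s : ℝ) : ℂ)) (ξ, η)
      = ((Fn Ts x : ℝ) : ℂ) := hval
  rw [hgoal, Complex.norm_real, Real.norm_eq_abs]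
  have hb1 : |Fn Ts x| ≤ csum Ts * ‖x‖ ^ r := Fn_bound hG hxne
  have hb2 : csum Ts * ‖x‖ ^ r ≤ Bc s m * ‖x‖ ^ r :=
    mul_le_mul_of_nonneg_right hC (Real.rpow_nonneg (norm_nonneg x) r)
  have hb3 : ‖x‖ ^ r ≤ ((3/2 : ℝ) ^ r + (1/2 : ℝ) ^ r) * ‖η‖ ^ r := by
    have hηr : (0:ℝ) ≤ ‖η‖ ^ r := Real.rpow_nonneg (norm_nonneg η) r
    rcases le_or_gt 0 r with hr0 | hr0
    · have : ‖x‖ ^ r ≤ (3/2 * ‖η‖) ^ r :=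
        Real.rpow_le_rpow (norm_nonneg x) hxhigh hr0
      rw [Real.mul_rpow (by norm_num) (norm_nonneg η)] at this
      have h2 : (0:ℝ) ≤ (1/2 : ℝ) ^ r * ‖η‖ ^ r :=
        mul_nonneg (Real.rpow_nonneg (by norm_num) r) hηr
      nlinarith
    · have hhalf : (0:ℝ) < 1/2 * ‖η‖ := by linarith
      have : ‖x‖ ^ r ≤ (1/2 * ‖η‖) ^ r := by
        refine Real.rpow_le_rpow_of_nonpos hhalf ?_ hr0.le
        linarith
      rw [Real.mul_rpow (by norm_num) (norm_nonneg η)] at this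
      have h2 : (0:ℝ) ≤ (3/2 : ℝ) ^ r * ‖η‖ ^ r :=
        mul_nonneg (Real.rpow_nonneg (by norm_num) r) hηr
      nlinarith
  have hexp : s - ((∑ i, α i : ℕ) : ℝ) - ((∑ i, β i : ℕ) : ℝ) = r := by
    rw [hr, hm]
    push_cast
    ring
  rw [hexp]
  calc |Fn Ts x| ≤ Bc s m * ‖x‖ ^ r := hb1.trans hb2
    _ ≤ Bc s m * (((3/2 : ℝ) ^ r + (1/2 : ℝ) ^ r) * ‖η‖ ^ r) :=
        mul_le_mul_of_nonneg_left hb3 (Bc_pos s m).le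
    _ = Bc s m * ((3/2 : ℝ) ^ r + (1/2 : ℝ) ^ r) * ‖η‖ ^ r := by ring


end
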